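/- Let L : H → G be bounded linear, bounded below, with ‖L‖ ≤ 1, let B be strictly positive on G, set κ = ‖B‖·‖B⁻¹‖ and ρ = (1 + √κ)². Then L* ∘ B ∘ L ≼ ρ (L* ▸ B), where L* ▸ B = (L* ∘ B⁻¹ ∘ L)⁻¹ is the parallel composition. -/

import Mathlib

open ContinuousLinearMap MeasureTheory

noncomputable section

variable {E : Type*} [NormedAddCommGroup E] [InnerProductSpace ℝ E] [CompleteSpace E]
variable {H G : Type*} [NormedAddCommGroup H] [InnerProductSpace ℝ H] [CompleteSpace H]
  [NormedAddCommGroup G] [InnerProductSpace ℝ G] [CompleteSpace G]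

/-- Löwner partial order: `A ≼ B` iff `B - A` is a positive operator. -/
def Loewner (A B : E →L[ℝ] E) : Prop := (B - A).IsPositive

/-- Strictly positive operators: `α • Id ≼ A` for some `α > 0`. -/
def StrictlyPos (A : E →L[ℝ] E) : Prop :=
  IsSelfAdjoint A ∧ ∃ α : ℝ, 0 < α ∧ Loewner (α • (1 : E →L[ℝ] E)) A

/-- Bounded below linear operator. -/
def BoundedBelow (L : H →L[ℝ] G) : Prop := ∃ β : ℝ, 0 < β ∧ ∀ x : H, β * ‖x‖ ≤ ‖L x‖

/-- Resolvent cocomposition `L ⊡_γ B = L* ∘ (B⁻¹ + γ(Id − L L*))⁻¹ ∘ L`. -/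
def rcc (L : H →L[ℝ] G) (γ : ℝ) (B : G →L[ℝ] G) : H →L[ℝ] H :=
  (adjoint L) ∘L (Ring.inverse (Ring.inverse B + γ • ((1 : G →L[ℝ] G) - L ∘L adjoint L))) ∘L L

/-- Resolvent composition `L ⊙_γ B = (L ⊡_{1/γ} B⁻¹)⁻¹`. -/
def rc (L : H →L[ℝ] G) (γ : ℝ) (B : G →L[ℝ] G) : H →L[ℝ] H :=
  Ring.inverse (rcc L (1/γ) (Ring.inverse B))

/-- Parallel composition `L* ▸ B = (L* ∘ B⁻¹ ∘ L)⁻¹`. -/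
def parallelComp (L : H →L[ℝ] G) (B : G →L[ℝ] G) : H →L[ℝ] H :=
  Ring.inverse ((adjoint L) ∘L (Ring.inverse B) ∘L L)

/-- `g(A,B) = inf {λ > 0 : A ≼ λ B}`. -/
def gThomp (A B : E →L[ℝ] E) : ℝ := sInf {l : ℝ | 0 < l ∧ Loewner A (l • B)}

/-- Thompson metric. -/
def dThomp (A B : E →L[ℝ] E) : ℝ := Real.log (max (gThomp A B) (gThomp B A))

/-- The (unique) positive square root of a positive operator. -/
def opSqrt (A : E →L[ℝ] E) : E →L[ℝ] E :=
  letI := Classical.propDecidable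
  if h : ∃ S : E →L[ℝ] E, S.IsPositive ∧ S * S = A then h.choose else 0

/-- Real power `A^t` of a strictly positive operator, `t ∈ (0,1)`, via the
Balakrishnan integral formula `A^t = (sin (π t)/π) ∫₀^∞ s^{t-1} A (A + s)⁻¹ ds`. -/
def opRpow (A : E →L[ℝ] E) (t : ℝ) : E →L[ℝ] E :=
  (Real.sin (Real.pi * t) / Real.pi) •
    ∫ s in Set.Ioi (0 : ℝ), s ^ (t - 1) • (A * Ring.inverse (A + s • (1 : E →L[ℝ] E)))

/-- Geometric mean `A # B = A^{1/2} (A^{-1/2} B A^{-1/2})^{1/2} A^{1/2}`. -/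
def geomMean (A B : E →L[ℝ] E) : E →L[ℝ] E :=
  opSqrt A * opSqrt (Ring.inverse (opSqrt A) * B * Ring.inverse (opSqrt A)) * opSqrt A

/-- `t`-weighted geometric mean `A #_t B = A^{1/2} (A^{-1/2} B A^{-1/2})^t A^{1/2}`. -/
def wGeomMean (t : ℝ) (A B : E →L[ℝ] E) : E →L[ℝ] E :=
  opSqrt A * opRpow (Ring.inverse (opSqrt A) * B * Ring.inverse (opSqrt A)) t * opSqrt A


section AuxCompLePar
open RealInnerProductSpace
namespace CompLePar

variable {E : Type*} [NormedAddCommGroup E] [InnerProductSpace ℝ E] [CompleteSpace E]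

lemma re_apply (T : E →L[ℝ] E) (x : E) : T.reApplyInnerSelf x = ⟪T x, x⟫ := rfl

lemma mysa {A : E →L[ℝ] E} (hA : IsSelfAdjoint A) (x y : E) : ⟪A x, y⟫ = ⟪x, A y⟫ := by
  conv_lhs => rw [← hA.adjoint_eq]
  exact adjoint_inner_left A y x

lemma cs_form {C : E →L[ℝ] E} (hsym : ∀ u v : E, ⟪C u, v⟫ = ⟪u, C v⟫)
    (hpos : ∀ u : E, 0 ≤ ⟪C u, u⟫) (u v : E) :
    ⟪C u, v⟫ ^ 2 ≤ ⟪C u, u⟫ * ⟪C v, v⟫ := by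
  have key : ∀ t : ℝ, 0 ≤ ⟪C v, v⟫ * (t * t) + (2 * ⟪C u, v⟫) * t + ⟪C u, u⟫ := by
    intro t
    have h := hpos (u + t • v)
    have hvu : ⟪C v, u⟫ = ⟪C u, v⟫ := by
      rw [hsym v u, real_inner_comm]
    simp only [map_add, _root_.map_smul, inner_add_left, inner_add_right, inner_smul_left,
      inner_smul_right, conj_trivial] at h
    rw [hvu] at h
    nlinarith [h]
  have := discrim_le_zero key
  rw [discrim] at this
  nlinarith [this]

lemma inner_le_norm_op (C : E →L[ℝ] E) (x : E) : ⟪C x, x⟫ ≤ ‖C‖ * ‖x‖ ^ 2 := by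
  calc ⟪C x, x⟫ ≤ ‖C x‖ * ‖x‖ := real_inner_le_norm _ _
    _ ≤ ‖C‖ * ‖x‖ * ‖x‖ := by
        have := C.le_opNorm x
        nlinarith [norm_nonneg x]
    _ = ‖C‖ * ‖x‖ ^ 2 := by ring

lemma coercive_isUnit {A : E →L[ℝ] E} {α : ℝ} (hα : 0 < α)
    (h : ∀ x : E, α * ‖x‖ ^ 2 ≤ ⟪A x, x⟫) : IsUnit A := by
  set Bf : E →L[ℝ] E →L[ℝ] ℝ := (innerSL ℝ).comp A with hBf
  have hco : IsCoercive Bf := by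
    refine ⟨α, hα, fun u => ?_⟩
    have h2 : α * ‖u‖ * ‖u‖ ≤ ⟪A u, u⟫ := by nlinarith [h u]
    simpa [hBf] using h2
  set T := hco.continuousLinearEquivOfBilin with hT
  have hTA : (T : E →L[ℝ] E) = A := by
    ext v
    refine ext_inner_right ℝ fun w => ?_
    have h3 := hco.continuousLinearEquivOfBilin_apply v w
    rw [← hT] at h3
    simpa [hBf] using h3
  refine ⟨⟨A, T.symm, ?_, ?_⟩, rfl⟩
  · ext x
    simp [← hTA, ContinuousLinearMap.mul_apply]
  · ext x
    simp [← hTA, ContinuousLinearMap.mul_apply]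

lemma lower_bound {P Q : E →L[ℝ] E} (hPsa : IsSelfAdjoint P)
    (hPpos : ∀ x : E, 0 ≤ ⟪P x, x⟫)
    (hPQ : ∀ x : E, P (Q x) = x) (x : E) : ‖x‖ ^ 2 ≤ ‖Q‖ * ⟪P x, x⟫ := by
  rcases eq_or_ne x 0 with rfl | hx
  · simp
  have hsym : ∀ u v : E, ⟪P u, v⟫ = ⟪u, P v⟫ := mysa hPsa
  have hcs := cs_form hsym hPpos (Q x) x
  have h1 : ⟪P (Q x), x⟫ = ‖x‖ ^ 2 := by rw [hPQ, real_inner_self_eq_norm_sq]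
  have h2 : ⟪P (Q x), Q x⟫ = ⟪Q x, x⟫ := by
    rw [hsym, hPQ, real_inner_comm]
  rw [h1, h2] at hcs
  have h3 : ⟪Q x, x⟫ ≤ ‖Q‖ * ‖x‖ ^ 2 := inner_le_norm_op Q x
  have hn : (0:ℝ) < ‖x‖ ^ 2 := pow_pos (norm_pos_iff.mpr hx) 2
  nlinarith [hcs, h3, hPpos x, hn]

lemma step1' {B : E →L[ℝ] E} (hBsa : IsSelfAdjoint B) {m M : ℝ} (hm : 0 < m) (hmM : m ≤ M)
    (hlow : ∀ v : E, m * ‖v‖ ^ 2 ≤ ⟪B v, v⟫)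
    (hup : ∀ v : E, ⟪B v, v⟫ ≤ M * ‖v‖ ^ 2) (w : E) :
    ⟪B (B w), B w⟫ + m * M * ⟪B w, w⟫ ≤ (m + M) * ‖B w‖ ^ 2 := by
  have hsym : ∀ u v : E, ⟪B u, v⟫ = ⟪u, B v⟫ := mysa hBsa
  have e1 : ⟪B (B w), w⟫ = ⟪B w, B w⟫ := by rw [hsym (B w) w, real_inner_comm]
  have e2 : ⟪w, B w⟫ = ⟪B w, w⟫ := real_inner_comm _ _
  have e3 : ⟪B w, B w⟫ = ‖B w‖ ^ 2 := real_inner_self_eq_norm_sq _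
  have hi := hup (B w - m • w)
  rw [← real_inner_self_eq_norm_sq (B w - m • w)] at hi
  simp only [map_sub, _root_.map_smul, inner_sub_left, inner_sub_right, inner_smul_left,
    inner_smul_right, conj_trivial] at hi
  have hii : ⟪B w, B w⟫ - 2 * m * ⟪B w, w⟫ + m ^ 2 * ⟪w, w⟫
      ≤ (M - m) * (⟪B w, w⟫ - m * ⟪w, w⟫) := by
    set C : E →L[ℝ] E := B - m • (1 : E →L[ℝ] E) with hC
    have hCapp : ∀ z : E, C z = B z - m • z := by
      intro z; simp [hC, ContinuousLinearMap.sub_apply, ContinuousLinearMap.smul_apply]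
    have hCsym : ∀ u v : E, ⟪C u, v⟫ = ⟪u, C v⟫ := by
      intro u v
      rw [hCapp, hCapp, inner_sub_left, inner_sub_right, hsym, inner_smul_left,
        inner_smul_right, conj_trivial]
    have hCpos : ∀ u : E, 0 ≤ ⟪C u, u⟫ := by
      intro u
      rw [hCapp, inner_sub_left, inner_smul_left, conj_trivial, real_inner_self_eq_norm_sq]
      nlinarith [hlow u]
    have hCup : ∀ z : E, ⟪C z, z⟫ ≤ (M - m) * ‖z‖ ^ 2 := by
      intro z
      rw [hCapp, inner_sub_left, inner_smul_left, conj_trivial, real_inner_self_eq_norm_sq]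
      nlinarith [hup z]
    have hcs := cs_form hCsym hCpos w (C w)
    have hCC := hCup (C w)
    have hCw2 : ⟪C w, C w⟫ = ‖C w‖ ^ 2 := real_inner_self_eq_norm_sq _
    have key : ⟪C w, C w⟫ ≤ (M - m) * ⟪C w, w⟫ := by
      rw [hCw2] at hcs
      rw [hCw2]
      rcases eq_or_lt_of_le (sq_nonneg ‖C w‖) with h0 | h0
      · rw [← h0]
        exact mul_nonneg (by linarith) (hCpos w)
      · nlinarith [hcs, mul_le_mul_of_nonneg_left hCC (hCpos w), hCpos w, h0]
    have hexp1 : ⟪C w, C w⟫ = ⟪B w, B w⟫ - 2 * m * ⟪B w, w⟫ + m ^ 2 * ⟪w, w⟫ := by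
      rw [hCapp]
      simp only [map_sub, _root_.map_smul, inner_sub_left, inner_sub_right, inner_smul_left,
        inner_smul_right, conj_trivial]
      rw [e2]; ring
    have hexp2 : ⟪C w, w⟫ = ⟪B w, w⟫ - m * ⟪w, w⟫ := by
      rw [hCapp, inner_sub_left, inner_smul_left, conj_trivial]
    rw [hexp1, hexp2] at key
    exact key
  rw [e1, e2] at hi
  rw [← e3]
  nlinarith [hi, mul_le_mul_of_nonneg_left hii hm.le]

end CompLePar
end AuxCompLePar

set_option maxHeartbeats 1000000 in
open RealInnerProductSpace CompLePar in
theorem comp_le_parallel (L : H →L[ℝ] G) (hL : BoundedBelow L) (hL1 : ‖L‖ ≤ 1)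
    (B : G →L[ℝ] G) (hB : StrictlyPos B) :
    Loewner ((adjoint L) ∘L B ∘L L)
      (((1 + Real.sqrt (‖B‖ * ‖Ring.inverse B‖)) ^ 2) • parallelComp L B) := by
  obtain ⟨hBsa, α, hα, hcoer⟩ := hB
  obtain ⟨β, hβ, hLlow⟩ := hL
  have hBlow0 : ∀ x : G, α * ‖x‖ ^ 2 ≤ ⟪B x, x⟫ := by
    intro x
    have h := hcoer.2 x
    rw [re_apply] at h
    simp only [ContinuousLinearMap.sub_apply, ContinuousLinearMap.smul_apply,
      ContinuousLinearMap.one_apply, inner_sub_left, inner_smul_left, conj_trivial,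
      real_inner_self_eq_norm_sq] at h
    linarith
  have hBpos : ∀ x : G, 0 ≤ ⟪B x, x⟫ := fun x =>
    le_trans (by positivity) (hBlow0 x)
  rcases subsingleton_or_nontrivial G with hG | hG
  · have hH : ∀ x : H, x = 0 := by
      intro x
      have h1 := hLlow x
      have h2 : L x = 0 := Subsingleton.elim _ _
      rw [h2, norm_zero] at h1
      have h3 : ‖x‖ ≤ 0 := by nlinarith [norm_nonneg x]
      exact norm_le_zero_iff.mp h3
    have hzero : ∀ T : H →L[ℝ] H, T = 0 := by
      intro T; ext x; rw [hH x]; simp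
    suffices h : ∀ T : H →L[ℝ] H, T.IsPositive by exact h _
    intro T
    rw [hzero T]
    exact isPositive_zero
  -- main case
  have hUB : IsUnit B := coercive_isUnit hα hBlow0
  set Binv := Ring.inverse B with hBinvdef
  have hBBi : ∀ g : G, B (Binv g) = g := by
    intro g
    rw [hBinvdef, ← ContinuousLinearMap.mul_apply, Ring.mul_inverse_cancel B hUB,
      ContinuousLinearMap.one_apply]
  have hBiB : ∀ g : G, Binv (B g) = g := by
    intro g
    rw [hBinvdef, ← ContinuousLinearMap.mul_apply, Ring.inverse_mul_cancel B hUB,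
      ContinuousLinearMap.one_apply]
  have hBisa : IsSelfAdjoint Binv := by
    have h := Ring.inverse_star B
    rw [hBsa.star_eq] at h
    exact h.symm
  have hBipos : ∀ x : G, 0 ≤ ⟪Binv x, x⟫ := by
    intro x
    have h0 := hBpos (Binv x)
    rw [hBBi x, real_inner_comm] at h0
    exact h0
  have hone1 : (1 : G →L[ℝ] G) ≠ 0 := by
    intro h
    obtain ⟨x, hx⟩ := exists_ne (0 : G)
    have := DFunLike.congr_fun h x
    simp at this
    exact hx this
  have hBinvne : Binv ≠ 0 := by
    intro h
    apply hone1
    rw [← Ring.mul_inverse_cancel B hUB, ← hBinvdef, h, mul_zero]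
  have hBinvpos : 0 < ‖Binv‖ := norm_pos_iff.mpr hBinvne
  have hMpos : 0 < ‖B‖ := by
    obtain ⟨x, hx⟩ := exists_ne (0 : G)
    have h1 := hBlow0 x
    have h2 := inner_le_norm_op B x
    have h3 : (0:ℝ) < ‖x‖ ^ 2 := pow_pos (norm_pos_iff.mpr hx) 2
    nlinarith
  set M := ‖B‖ with hMdef
  set m := ‖Binv‖⁻¹ with hmdef
  have hm : 0 < m := inv_pos.mpr hBinvpos
  have hminv : m * ‖Binv‖ = 1 := inv_mul_cancel₀ hBinvpos.ne'
  have hBup : ∀ v : G, ⟪B v, v⟫ ≤ M * ‖v‖ ^ 2 := inner_le_norm_op B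
  have hBlow : ∀ v : G, m * ‖v‖ ^ 2 ≤ ⟪B v, v⟫ := by
    intro v
    have h1 := lower_bound hBsa hBpos hBBi v
    nlinarith [mul_le_mul_of_nonneg_left h1 hm.le, hBpos v]
  have hBilow : ∀ v : G, ‖v‖ ^ 2 ≤ M * ⟪Binv v, v⟫ := fun v =>
    lower_bound hBisa hBipos hBiB v
  have hone : (1:ℝ) ≤ M * ‖Binv‖ := by
    have h1 : ‖(1 : G →L[ℝ] G)‖ = 1 := norm_one
    calc (1:ℝ) = ‖(1 : G →L[ℝ] G)‖ := h1.symm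
      _ = ‖B * Binv‖ := by rw [hBinvdef, Ring.mul_inverse_cancel B hUB]
      _ ≤ M * ‖Binv‖ := norm_mul_le _ _
  have hmM : m ≤ M := by
    have h2 : m * (M * ‖Binv‖) = M := by
      rw [mul_comm M, ← mul_assoc, hminv, one_mul]
    nlinarith [mul_le_mul_of_nonneg_left hone hm.le]
  -- the operator M₀ = L* ∘ B⁻¹ ∘ L and its inverse P
  set M0 : H →L[ℝ] H := (adjoint L) ∘L Binv ∘L L with hM0def
  have hM0app : ∀ x : H, M0 x = adjoint L (Binv (L x)) := fun x => rfl
  have hM0inner : ∀ x y : H, ⟪M0 x, y⟫ = ⟪Binv (L x), L y⟫ := by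
    intro x y
    rw [hM0app]
    exact adjoint_inner_left L y (Binv (L x))
  have hBiPos : Binv.IsPositive := isPositive_def'.mpr ⟨hBisa, fun x => by rw [re_apply]; exact hBipos x⟩
  have hM0pos : M0.IsPositive := hBiPos.adjoint_conj L
  have hM0sa : IsSelfAdjoint M0 := hM0pos.isSelfAdjoint
  have hα0 : 0 < β ^ 2 / M := div_pos (pow_pos hβ 2) hMpos
  have hM0low : ∀ x : H, (β ^ 2 / M) * ‖x‖ ^ 2 ≤ ⟪M0 x, x⟫ := by
    intro x
    rw [hM0inner x x]
    have h1 := hBilow (L x)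
    have h2 := hLlow x
    have h2' : β ^ 2 * ‖x‖ ^ 2 ≤ ‖L x‖ ^ 2 := by
      nlinarith [mul_le_mul h2 h2 (by positivity) (norm_nonneg (L x))]
    rw [div_mul_eq_mul_div, div_le_iff₀ hMpos]
    nlinarith [hBipos (L x)]
  have hM0pos' : ∀ x : H, 0 ≤ ⟪M0 x, x⟫ := fun x =>
    le_trans (by positivity) (hM0low x)
  have hUM0 : IsUnit M0 := coercive_isUnit hα0 hM0low
  set P := Ring.inverse M0 with hPdef
  have hM0P : ∀ x : H, M0 (P x) = x := by
    intro x
    rw [hPdef, ← ContinuousLinearMap.mul_apply, Ring.mul_inverse_cancel M0 hUM0,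
      ContinuousLinearMap.one_apply]
  have hPsa : IsSelfAdjoint P := by
    have h := Ring.inverse_star M0
    rw [hM0sa.star_eq] at h
    exact h.symm
  have hPpos : ∀ x : H, 0 ≤ ⟪P x, x⟫ := by
    intro x
    have h0 := hM0pos' (P x)
    rw [hM0inner (P x) (P x)] at h0
    have h1 : ⟪P x, x⟫ = ⟪M0 (P x), P x⟫ := by
      rw [hM0P, real_inner_comm]
    rw [h1, hM0inner (P x) (P x)]
    exact h0
  have hPpar : parallelComp L B = P := by
    unfold parallelComp
    rw [← hBinvdef, ← hM0def, ← hPdef]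
  -- scalar facts
  set s := Real.sqrt (M * ‖Binv‖) with hsdef
  have hs1 : (1:ℝ) ≤ s := by
    rw [hsdef, show (1:ℝ) = Real.sqrt 1 from (Real.sqrt_one).symm]
    exact Real.sqrt_le_sqrt hone
  have hs2 : s ^ 2 = M * ‖Binv‖ := Real.sq_sqrt (by positivity)
  have hMs : m * s ^ 2 = M := by
    rw [hs2, mul_comm M, ← mul_assoc, hminv, one_mul]
  set ρ := (1 + s) ^ 2 with hρdef
  have hρ : (m + M) ^ 2 ≤ 4 * (m * M) * ρ := by
    have h1 : 1 + s ^ 2 ≤ 2 * s + 2 * s ^ 2 := by nlinarith [hs1]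
    have h2 : (1 + s ^ 2) ^ 2 ≤ (2 * s + 2 * s ^ 2) ^ 2 := by
      nlinarith [mul_self_le_mul_self (by positivity : (0:ℝ) ≤ 1 + s ^ 2) h1]
    rw [← hMs, hρdef]
    nlinarith [mul_le_mul_of_nonneg_left h2 (mul_pos hm hm).le]
  -- assemble
  unfold Loewner
  rw [hPpar]
  have hBPos : B.IsPositive := isPositive_def'.mpr ⟨hBsa, fun x => by rw [re_apply]; exact hBpos x⟩
  have hLBLsa : IsSelfAdjoint ((adjoint L) ∘L B ∘L L) := (hBPos.adjoint_conj L).isSelfAdjoint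
  have hρPsa : IsSelfAdjoint (ρ • P) := by
    unfold IsSelfAdjoint
    rw [star_smul, star_trivial, hPsa.star_eq]
  refine isPositive_def'.mpr ⟨hρPsa.sub hLBLsa, ?_⟩
  intro x
  rw [re_apply]
  simp only [ContinuousLinearMap.sub_apply, ContinuousLinearMap.smul_apply, inner_sub_left,
    inner_smul_left, conj_trivial]
  have hLBLx : ⟪((adjoint L) ∘L B ∘L L) x, x⟫ = ⟪B (L x), L x⟫ := by
    show ⟪adjoint L (B (L x)), x⟫ = _
    exact adjoint_inner_left L x (B (L x))
  rw [hLBLx]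
  -- step 1
  have hst := step1' hBsa hm hmM hBlow hBup (Binv (L x))
  rw [hBBi (L x)] at hst
  have hMB : ⟪L x, Binv (L x)⟫ = ⟪M0 x, x⟫ := by
    rw [real_inner_comm]
    exact (hM0inner x x).symm
  rw [hMB] at hst
  have hLx : ‖L x‖ ^ 2 ≤ ‖x‖ ^ 2 := by
    have h1 := L.le_opNorm x
    have h2 : ‖L x‖ ≤ ‖x‖ := le_trans h1 (mul_le_of_le_one_left (norm_nonneg x) hL1)
    nlinarith [norm_nonneg (L x), norm_nonneg x, h2]
  -- step 3 : quadratic completion with z = (2mM) x - (m+M) P x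
  have hz := hM0pos' ((2 * (m * M)) • x - (m + M) • P x)
  simp only [map_sub, _root_.map_smul, inner_sub_left, inner_sub_right, inner_smul_left,
    inner_smul_right, conj_trivial] at hz
  have e5 : ⟪M0 (P x), x⟫ = ‖x‖ ^ 2 := by rw [hM0P, real_inner_self_eq_norm_sq]
  have e6 : ⟪M0 x, P x⟫ = ‖x‖ ^ 2 := by
    rw [mysa hM0sa x (P x), hM0P, real_inner_self_eq_norm_sq]
  have e7 : ⟪M0 (P x), P x⟫ = ⟪P x, x⟫ := by
    rw [hM0P, real_inner_comm]
  rw [e5, e6, e7] at hz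
  have key1 : (m + M) * ‖x‖ ^ 2 - m * M * ⟪M0 x, x⟫ ≤ ρ * ⟪P x, x⟫ := by
    nlinarith [hz, hρ, hPpos x, mul_pos hm hMpos, hM0pos' x]
  nlinarith [key1, hst, mul_le_mul_of_nonneg_left hLx (by linarith : (0:ℝ) ≤ m + M)]


end
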